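/- arXiv:1704.06966 — 5 statements merged into one kernel-verified Lean document; each statement's English description precedes it below -/
import Mathlib

section
/- Let 𝓗 be a complex Hilbert space and let χ, χ̄, T, W be bounded linear operators on 𝓗 such that χ and χ̄ commute with each other and with T, and χ² + χ̄² = 1. Set H := T + W and H_χ̄ := T + χ̄Wχ̄; note that both T and H_χ̄ map the subspace Ran χ̄ into itself. Assume that T restricts to a bijection of Ran χ̄ onto itself and that H_χ̄ restricts to a bijection of Ran χ̄ onto itself, and let J : Ran χ̄ → Ran χ̄ denote the inverse of the restriction of H_χ̄. Define the smooth Feshbach operator F := T + χWχ − χW χ̄ (J(χ̄ W χ ·)) (well defined since χ̄Wχ maps 𝓗 into Ran χ̄) and the auxiliary operator Q := χ − χ̄ (J(χ̄ W χ ·)). Then for every ψ ∈ 𝓗 with Hψ = 0 one has F(χψ) = 0 and Q(χψ) = ψ; in particular χ maps ker H injectively into ker F. -/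
/-- **Smooth Feshbach isospectrality, forward direction.**
Given a smoothed projection pair `χ, χb` (commuting, `χ² + χb² = 1`) commuting with `T`,
with `H = T + W`, `Hχb = T + χb W χb`, such that `T` and `Hχb` restrict to bijections of
`Ran χb` onto itself, and `J` the inverse of the restriction of `Hχb`, define the Feshbach
operator `F v = T v + χWχ v − χW χb (J (χb W χ v))` and `Q v = χ v − χb (J (χb W χ v))`.
Then `Hψ = 0` implies `F (χψ) = 0` and `Q (χψ) = ψ`; in particular `χ` is injective on
`ker H`. -/
theorem smooth_feshbach_forward
    {𝓗 : Type*} [NormedAddCommGroup 𝓗] [InnerProductSpace ℂ 𝓗] [CompleteSpace 𝓗]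
    (χ χb T W : 𝓗 →L[ℂ] 𝓗)
    (hcomm : χ * χb = χb * χ)
    (hχT : χ * T = T * χ) (hχbT : χb * T = T * χb)
    (hsum : χ ^ 2 + χb ^ 2 = 1)
    (hTbij : Set.BijOn T ((LinearMap.range (χb : 𝓗 →ₗ[ℂ] 𝓗) : Submodule ℂ 𝓗) : Set 𝓗)
      ((LinearMap.range (χb : 𝓗 →ₗ[ℂ] 𝓗) : Submodule ℂ 𝓗) : Set 𝓗))
    (hHbij : Set.BijOn (T + χb * W * χb) ((LinearMap.range (χb : 𝓗 →ₗ[ℂ] 𝓗) : Submodule ℂ 𝓗) : Set 𝓗)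
      ((LinearMap.range (χb : 𝓗 →ₗ[ℂ] 𝓗) : Submodule ℂ 𝓗) : Set 𝓗))
    (J : 𝓗 → 𝓗)
    (hJmem : ∀ x ∈ LinearMap.range (χb : 𝓗 →ₗ[ℂ] 𝓗), J x ∈ LinearMap.range (χb : 𝓗 →ₗ[ℂ] 𝓗))
    (hJleft : ∀ x ∈ LinearMap.range (χb : 𝓗 →ₗ[ℂ] 𝓗), (T + χb * W * χb) (J x) = x)
    (hJright : ∀ x ∈ LinearMap.range (χb : 𝓗 →ₗ[ℂ] 𝓗), J ((T + χb * W * χb) x) = x)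
    (F Q : 𝓗 → 𝓗)
    (hF : ∀ v, F v = T v + χ (W (χ v)) - χ (W (χb (J (χb (W (χ v)))))))
    (hQ : ∀ v, Q v = χ v - χb (J (χb (W (χ v))))) :
    ∀ ψ : 𝓗, (T + W) ψ = 0 →
      F (χ ψ) = 0 ∧ Q (χ ψ) = ψ ∧
        (∀ ψ' : 𝓗, (T + W) ψ' = 0 → χ ψ = χ ψ' → ψ = ψ') := by
  have hsum' : ∀ x : 𝓗, χ (χ x) + χb (χb x) = x := by
    intro x
    have := ContinuousLinearMap.ext_iff.mp hsum x
    simpa [pow_two, ContinuousLinearMap.mul_apply] using this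
  have hχbT' : ∀ x : 𝓗, χb (T x) = T (χb x) := by
    intro x
    have := ContinuousLinearMap.ext_iff.mp hχbT x
    simpa [ContinuousLinearMap.mul_apply] using this
  have hχT' : ∀ x : 𝓗, χ (T x) = T (χ x) := by
    intro x
    have := ContinuousLinearMap.ext_iff.mp hχT x
    simpa [ContinuousLinearMap.mul_apply] using this
  have hJkey : ∀ φ : 𝓗, (T + W) φ = 0 → J (χb (W (χ (χ φ)))) = -(χb φ) := by
    intro φ hφ
    have hφ' : T φ + W φ = 0 := by simpa using hφ
    have hTW : T φ = -(W φ) := eq_neg_of_add_eq_zero_left hφ'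
    have h2 : χ (χ φ) = φ - χb (χb φ) := eq_sub_of_add_eq (hsum' φ)
    have hval : (T + χb * W * χb) (-(χb φ)) = χb (W (χ (χ φ))) := by
      simp only [ContinuousLinearMap.add_apply, ContinuousLinearMap.mul_apply, map_neg]
      rw [h2, map_sub W, map_sub χb, ← hχbT' φ, hTW]
      simp only [map_neg]
      abel
    have hmem : -(χb φ) ∈ LinearMap.range (χb : 𝓗 →ₗ[ℂ] 𝓗) := ⟨-φ, by simp⟩
    have h3 := hJright _ hmem
    rwa [hval] at h3
  have hQval : ∀ φ : 𝓗, (T + W) φ = 0 → Q (χ φ) = φ := by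
    intro φ h
    rw [hQ, hJkey φ h, map_neg, sub_neg_eq_add, hsum']
  intro ψ hψ
  refine ⟨?_, hQval ψ hψ, fun ψ' h' he => by rw [← hQval ψ hψ, ← hQval ψ' h', he]⟩
  rw [hF, hJkey ψ hψ]
  have hψ' : T ψ + W ψ = 0 := by simpa using hψ
  have hW : χ (W (χ (χ ψ))) + χ (W (χb (χb ψ))) = χ (W ψ) := by
    rw [← map_add, ← map_add, hsum']
  simp only [map_neg, sub_neg_eq_add]
  rw [← hχT' ψ] at *
  calc χ (T ψ) + χ (W (χ (χ ψ))) + χ (W (χb (χb ψ)))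
      = χ (T ψ) + (χ (W (χ (χ ψ))) + χ (W (χb (χb ψ)))) := by abel
    _ = χ (T ψ) + χ (W ψ) := by rw [hW]
    _ = χ (T ψ + W ψ) := by rw [map_add]
    _ = 0 := by rw [hψ', map_zero]
end

section
/- Let 𝓗 be a complex Hilbert space and let χ, χ̄, T, W be bounded linear operators on 𝓗 such that χ and χ̄ commute with each other and with T, and χ² + χ̄² = 1. Set H := T + W and H_χ̄ := T + χ̄Wχ̄; note that both T and H_χ̄ map the subspace Ran χ̄ into itself. Assume that T restricts to a bijection of Ran χ̄ onto itself and that H_χ̄ restricts to a bijection of Ran χ̄ onto itself, and let J : Ran χ̄ → Ran χ̄ denote the inverse of the restriction of H_χ̄. Define the smooth Feshbach operator F := T + χWχ − χW χ̄ (J(χ̄ W χ ·)) and the auxiliary operator Q := χ − χ̄ (J(χ̄ W χ ·)). Then for every φ ∈ 𝓗 with Fφ = 0 one has H(Qφ) = 0 and χ(Qφ) = φ; in particular Q maps ker F injectively into ker H, and together with the reverse direction, χ : ker H → ker F and Q : ker F → ker H are linear isomorphisms inverse to each other. -/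
/-- **Smooth Feshbach isospectrality, reverse direction.**
With the same setup as the forward direction (smoothed projection pair `χ, χb` commuting
with `T`, `H = T + W`, `Hχb = T + χb W χb` restricting to bijections of `Ran χb`,
`J` the inverse of the restriction of `Hχb`, Feshbach operator
`F v = T v + χWχ v − χW χb (J (χb W χ v))`, auxiliary operator
`Q v = χ v − χb (J (χb W χ v))`): if `Fφ = 0` then `H (Qφ) = 0` and `χ (Qφ) = φ`;
in particular `Q` is injective on `ker F`, and together with the forward direction
(`Hψ = 0 → F(χψ) = 0 ∧ Q(χψ) = ψ`), `χ : ker H → ker F` and `Q : ker F → ker H` are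
inverse to each other. -/
theorem smooth_feshbach_reverse
    {𝓗 : Type*} [NormedAddCommGroup 𝓗] [InnerProductSpace ℂ 𝓗] [CompleteSpace 𝓗]
    (χ χb T W : 𝓗 →L[ℂ] 𝓗)
    (hcomm : χ * χb = χb * χ)
    (hχT : χ * T = T * χ) (hχbT : χb * T = T * χb)
    (hsum : χ ^ 2 + χb ^ 2 = 1)
    (hTbij : Set.BijOn T ((LinearMap.range (χb : 𝓗 →ₗ[ℂ] 𝓗) : Submodule ℂ 𝓗) : Set 𝓗)
      ((LinearMap.range (χb : 𝓗 →ₗ[ℂ] 𝓗) : Submodule ℂ 𝓗) : Set 𝓗))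
    (hHbij : Set.BijOn (T + χb * W * χb) ((LinearMap.range (χb : 𝓗 →ₗ[ℂ] 𝓗) : Submodule ℂ 𝓗) : Set 𝓗)
      ((LinearMap.range (χb : 𝓗 →ₗ[ℂ] 𝓗) : Submodule ℂ 𝓗) : Set 𝓗))
    (J : 𝓗 → 𝓗)
    (hJmem : ∀ x ∈ LinearMap.range (χb : 𝓗 →ₗ[ℂ] 𝓗), J x ∈ LinearMap.range (χb : 𝓗 →ₗ[ℂ] 𝓗))
    (hJleft : ∀ x ∈ LinearMap.range (χb : 𝓗 →ₗ[ℂ] 𝓗), (T + χb * W * χb) (J x) = x)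
    (hJright : ∀ x ∈ LinearMap.range (χb : 𝓗 →ₗ[ℂ] 𝓗), J ((T + χb * W * χb) x) = x)
    (F Q : 𝓗 → 𝓗)
    (hF : ∀ v, F v = T v + χ (W (χ v)) - χ (W (χb (J (χb (W (χ v)))))))
    (hQ : ∀ v, Q v = χ v - χb (J (χb (W (χ v))))) :
    (∀ φ : 𝓗, F φ = 0 →
      (T + W) (Q φ) = 0 ∧ χ (Q φ) = φ ∧
        (∀ φ' : 𝓗, F φ' = 0 → Q φ = Q φ' → φ = φ')) ∧
    (∀ ψ : 𝓗, (T + W) ψ = 0 → F (χ ψ) = 0 ∧ Q (χ ψ) = ψ) := by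
  have hcomm' : ∀ v : 𝓗, χ (χb v) = χb (χ v) := fun v => by
    have := congrArg (fun f : 𝓗 →L[ℂ] 𝓗 => f v) hcomm
    simpa [ContinuousLinearMap.mul_apply] using this
  have hχT' : ∀ v : 𝓗, χ (T v) = T (χ v) := fun v => by
    have := congrArg (fun f : 𝓗 →L[ℂ] 𝓗 => f v) hχT
    simpa [ContinuousLinearMap.mul_apply] using this
  have hχbT' : ∀ v : 𝓗, χb (T v) = T (χb v) := fun v => by
    have := congrArg (fun f : 𝓗 →L[ℂ] 𝓗 => f v) hχbT
    simpa [ContinuousLinearMap.mul_apply] using this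
  have hsum' : ∀ v : 𝓗, χ (χ v) + χb (χb v) = v := fun v => by
    have := congrArg (fun f : 𝓗 →L[ℂ] 𝓗 => f v) hsum
    simpa [pow_two, ContinuousLinearMap.mul_apply, ContinuousLinearMap.add_apply] using this
  have hHapp : ∀ z : 𝓗, (T + χb * W * χb) z = T z + χb (W (χb z)) := fun z => by
    simp [ContinuousLinearMap.add_apply, ContinuousLinearMap.mul_apply]
  -- main computation for the reverse direction
  have main : ∀ φ : 𝓗, F φ = 0 → (T + W) (Q φ) = 0 ∧ χ (Q φ) = φ := by
    intro φ hφ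
    set u : 𝓗 := J (χb (W (χ φ))) with hu
    have hxmem : χb (W (χ φ)) ∈ LinearMap.range (χb : 𝓗 →ₗ[ℂ] 𝓗) := ⟨W (χ φ), rfl⟩
    have humem : u ∈ LinearMap.range (χb : 𝓗 →ₗ[ℂ] 𝓗) := hJmem _ hxmem
    have hHu : T u + χb (W (χb u)) = χb (W (χ φ)) := by
      have := hJleft _ hxmem
      rwa [hHapp] at this
    have hF' : T φ + χ (W (χ φ)) - χ (W (χb u)) = 0 := by
      rw [hF φ] at hφ; exact hφ
    have hQφ : Q φ = χ φ - χb u := hQ φ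
    have e1 : T (χb u) = χb (χb (W (χ φ))) - χb (χb (W (χb u))) := by
      rw [← hχbT', ← map_sub]
      congr 1
      have : T u = χb (W (χ φ)) - χb (W (χb u)) := by
        rw [← hHu]; abel
      rw [this]
    have hsub : ∀ v : 𝓗, v - χb (χb v) = χ (χ v) := fun v =>
      sub_eq_of_eq_add' ((hsum' v).symm.trans (add_comm _ _))
    have h0 : χ (T φ) + χ (χ (W (χ φ))) - χ (χ (W (χb u))) = 0 := by
      rw [← map_add, ← map_sub, hF', map_zero]
    constructor
    · rw [hQφ]
      have key : (T + W) (χ φ - χb u)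
          = χ (T φ) + (W (χ φ) - χb (χb (W (χ φ)))) - (W (χb u) - χb (χb (W (χb u)))) := by
        simp only [ContinuousLinearMap.add_apply, map_sub]
        rw [← hχT' φ, e1]
        abel
      rw [key, hsub, hsub, h0]
    · -- χ (Q φ) = φ
      have hTp : T (χb (χb φ) + χb (χ u)) = 0 := by
        have hTφ : T φ = χ (W (χb u)) - χ (W (χ φ)) := by
          have h := sub_eq_zero.mp hF'
          exact eq_sub_of_add_eq h
        have hTu : T u = χb (W (χ φ)) - χb (W (χb u)) := by
          rw [← hHu]; abel
        rw [map_add, ← hχbT', ← hχbT', ← hχbT', ← hχT', hTφ, hTu]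
        rw [map_sub, map_sub, map_sub, map_sub, hcomm' (W (χ φ)), hcomm' (W (χb u))]
        abel
      have hpmem : χb (χb φ) + χb (χ u) ∈ LinearMap.range (χb : 𝓗 →ₗ[ℂ] 𝓗) := by
        refine ⟨χb φ + χ u, ?_⟩
        rw [map_add]
        rfl
      have hz : χb (χb φ) + χb (χ u) = 0 := by
        have h0mem : (0 : 𝓗) ∈ LinearMap.range (χb : 𝓗 →ₗ[ℂ] 𝓗) := ⟨0, map_zero χb⟩
        have := hTbij.injOn hpmem h0mem (by rw [hTp, map_zero])
        exact this
      rw [hQφ]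
      calc χ (χ φ - χb u) = χ (χ φ) - χb (χ u) := by rw [map_sub, hcomm']
        _ = (χ (χ φ) + χb (χb φ)) - (χb (χb φ) + χb (χ u)) := by abel
        _ = φ - 0 := by rw [hsum' φ, hz]
        _ = φ := sub_zero φ
  refine ⟨fun φ hφ => ⟨(main φ hφ).1, (main φ hφ).2, fun φ' hφ' h => ?_⟩, ?_⟩
  · rw [← (main φ hφ).2, ← (main φ' hφ').2, h]
  · intro ψ hψ
    have hψ' : T ψ + W ψ = 0 := by
      have : (T + W) ψ = T ψ + W ψ := rfl
      rw [← this]; exact hψ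
    have hWsplit : W ψ = W (χ (χ ψ)) + W (χb (χb ψ)) := by
      rw [← map_add, hsum']
    have hmem : -χb ψ ∈ LinearMap.range (χb : 𝓗 →ₗ[ℂ] 𝓗) := ⟨-ψ, map_neg χb ψ⟩
    have hHneg : (T + χb * W * χb) (-χb ψ) = χb (W (χ (χ ψ))) := by
      have hTψ : T ψ = -W ψ := eq_neg_of_add_eq_zero_left hψ'
      rw [hHapp]
      simp only [map_neg, ← hχbT', hTψ, neg_neg]
      rw [hWsplit, map_add]
      abel
    have key : J (χb (W (χ (χ ψ)))) = -χb ψ := by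
      rw [← hHneg]; exact hJright _ hmem
    constructor
    · rw [hF, key]
      have : T (χ ψ) + χ (W (χ (χ ψ))) - χ (W (χb (-χb ψ))) = χ (T ψ + W ψ) := by
        rw [← hχT', map_add, hWsplit, map_add, map_neg, map_neg, map_neg]
        abel
      rw [this, hψ', map_zero]
    · rw [hQ, key, map_neg, sub_neg_eq_add, hsum']
end

section
/- Let 𝓗 be a complex Hilbert space and let χ, χ̄, T, W be bounded linear operators on 𝓗 such that χ and χ̄ commute with each other and with T, χ² + χ̄² = 1, ‖χ‖ ≤ 1 and ‖χ̄‖ ≤ 1. Let 0 < ρ ≤ 1 and let M denote the closure of Ran χ̄, which is invariant under T. Assume that T restricts to a bijection of M onto itself whose inverse J_T satisfies ‖J_T x‖ ≤ (8/ρ)‖x‖ for all x ∈ M, and assume ‖W‖ < ρ/8. Then H_χ̄ := T + χ̄Wχ̄ maps M into itself and restricts to a bijection of M onto itself with bounded inverse J (so that (T + W, T) is a Feshbach pair for χ), and the Feshbach operator F := T + χWχ − χW χ̄ (J(χ̄ W χ ·)) admits the expansion F = T + Σ_{L=1}^∞ (−1)^{L−1} χ W (Ř W)^{L−1} χ, where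 Ř is the bounded operator on 𝓗 defined by Ř x := J_T(χ̄² x); the series converges absolutely in operator norm. -/
set_option maxHeartbeats 1000000 in
/-- **Abstract Feshbach pair criterion with Neumann expansion.**
Let `χ, χb, T, W` be bounded operators on a complex Hilbert space, with `χ, χb` commuting
with each other and with `T`, `χ² + χb² = 1`, `‖χ‖ ≤ 1`, `‖χb‖ ≤ 1`. Let `0 < ρ ≤ 1` and
let `M` be the closure of `Ran χb`. Assume `T` restricts to a bijection of `M` onto itself
with inverse `JT` satisfying `‖JT x‖ ≤ (8/ρ)‖x‖` on `M`, and `‖W‖ < ρ/8`. Then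
`Hχb := T + χb W χb` maps `M` into itself and restricts to a bijection of `M` with a
bounded inverse `J`, and the Feshbach operator
`F v = T v + χWχ v − χW χb (J (χb W χ v))` admits the absolutely (operator-norm)
convergent expansion `F = T + Σ_{n=0}^∞ (−1)^n χ W (Rop W)^n χ`, where `Rop x = JT (χb² x)`. -/
theorem feshbach_pair_criterion_second_iteration
    {𝓗 : Type*} [NormedAddCommGroup 𝓗] [InnerProductSpace ℂ 𝓗] [CompleteSpace 𝓗]
    (χ χb T W : 𝓗 →L[ℂ] 𝓗)
    (hcomm : χ * χb = χb * χ)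
    (hχT : χ * T = T * χ) (hχbT : χb * T = T * χb)
    (hsum : χ ^ 2 + χb ^ 2 = 1)
    (hnχ : ‖χ‖ ≤ 1) (hnχb : ‖χb‖ ≤ 1)
    (ρ : ℝ) (hρ0 : 0 < ρ) (hρ1 : ρ ≤ 1)
    (M : Set 𝓗) (hM : M = closure (Set.range χb))
    (hTbij : Set.BijOn T M M)
    (JT : 𝓗 → 𝓗)
    (hJTmem : ∀ x ∈ M, JT x ∈ M)
    (hJTleft : ∀ x ∈ M, T (JT x) = x)
    (hJTright : ∀ x ∈ M, JT (T x) = x)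
    (hJTbound : ∀ x ∈ M, ‖JT x‖ ≤ (8 / ρ) * ‖x‖)
    (hW : ‖W‖ < ρ / 8) :
    Set.MapsTo (T + χb * W * χb) M M ∧
    Set.BijOn (T + χb * W * χb) M M ∧
    ∃ J : 𝓗 → 𝓗,
      (∀ x ∈ M, J x ∈ M) ∧
      (∀ x ∈ M, (T + χb * W * χb) (J x) = x) ∧
      (∀ x ∈ M, J ((T + χb * W * χb) x) = x) ∧
      (∃ C : ℝ, 0 ≤ C ∧ ∀ x ∈ M, ‖J x‖ ≤ C * ‖x‖) ∧
      ∃ Rop : 𝓗 →L[ℂ] 𝓗, (∀ x, Rop x = JT (χb (χb x))) ∧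
        Summable (fun n : ℕ => ‖χ * W * (Rop * W) ^ n * χ‖) ∧
        ∃ F : 𝓗 →L[ℂ] 𝓗,
          (∀ v, F v = T v + χ (W (χ v)) - χ (W (χb (J (χb (W (χ v))))))) ∧
          HasSum (fun n : ℕ => ((-1 : ℂ) ^ n) • (χ * W * (Rop * W) ^ n * χ)) (F - T) := by
  classical
  -- M as a (topologically closed) submodule
  have hMsub : M = (((LinearMap.range (χb : 𝓗 →ₗ[ℂ] 𝓗)).topologicalClosure :
      Submodule ℂ 𝓗) : Set 𝓗) := by
    rw [hM, Submodule.topologicalClosure_coe]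
    simp [LinearMap.coe_range]
  have hadd : ∀ x ∈ M, ∀ y ∈ M, x + y ∈ M := by
    intro x hx y hy
    rw [hMsub] at hx hy ⊢
    exact Submodule.add_mem _ hx hy
  have hsmulM : ∀ (c : ℂ), ∀ x ∈ M, c • x ∈ M := by
    intro c x hx
    rw [hMsub] at hx ⊢
    exact Submodule.smul_mem _ c hx
  have hsubM : ∀ x ∈ M, ∀ y ∈ M, x - y ∈ M := by
    intro x hx y hy
    rw [hMsub] at hx hy ⊢
    exact Submodule.sub_mem _ hx hy
  have hrange : ∀ x, χb x ∈ M := by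
    intro x
    rw [hM]
    exact subset_closure ⟨x, rfl⟩
  have hχbM : ∀ x ∈ M, χb x ∈ M := by
    intro x hx
    rw [hM] at hx ⊢
    have h1 : χb x ∈ χb '' closure (Set.range χb) := ⟨x, hx, rfl⟩
    have h2 := image_closure_subset_closure_image (s := Set.range χb) χb.continuous h1
    refine closure_mono ?_ h2
    rintro y ⟨z, ⟨w, rfl⟩, rfl⟩
    exact ⟨χb w, rfl⟩
  -- JT is linear and commutes with χb on M
  have hJTadd : ∀ x ∈ M, ∀ y ∈ M, JT (x + y) = JT x + JT y := by
    intro x hx y hy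
    have hz : JT x + JT y ∈ M := hadd _ (hJTmem x hx) _ (hJTmem y hy)
    have hT : T (JT x + JT y) = x + y := by
      rw [map_add, hJTleft x hx, hJTleft y hy]
    rw [← hT, hJTright _ hz]
  have hJTsmul : ∀ (c : ℂ), ∀ x ∈ M, JT (c • x) = c • JT x := by
    intro c x hx
    have hz : c • JT x ∈ M := hsmulM c _ (hJTmem x hx)
    have hT : T (c • JT x) = c • x := by rw [map_smul, hJTleft x hx]
    rw [← hT, hJTright _ hz]
  have hJTχb : ∀ x ∈ M, JT (χb x) = χb (JT x) := by
    intro x hx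
    have hz : χb (JT x) ∈ M := hχbM _ (hJTmem x hx)
    have hT : T (χb (JT x)) = χb x := by
      have := congrArg (fun S : 𝓗 →L[ℂ] 𝓗 => S (JT x)) hχbT
      simp only [ContinuousLinearMap.mul_apply] at this
      rw [← this, hJTleft x hx]
    rw [← hT, hJTright _ hz]
  have hb1 : ∀ y : 𝓗, ‖χb y‖ ≤ ‖y‖ := by
    intro y
    exact (χb.le_opNorm y).trans (mul_le_of_le_one_left (norm_nonneg y) hnχb)
  -- construction of JT ∘ χb ∘ B as a continuous linear map
  have key : ∀ B : 𝓗 →L[ℂ] 𝓗, ∃ E : 𝓗 →L[ℂ] 𝓗,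
      (∀ x, E x = JT (χb (B x))) ∧ ‖E‖ ≤ 8 / ρ * ‖B‖ := by
    intro B
    have h8 : (0 : ℝ) ≤ 8 / ρ := by positivity
    have hbd : ∀ x, ‖JT (χb (B x))‖ ≤ 8 / ρ * ‖B‖ * ‖x‖ := by
      intro x
      calc ‖JT (χb (B x))‖ ≤ 8 / ρ * ‖χb (B x)‖ := hJTbound _ (hrange _)
        _ ≤ 8 / ρ * (‖B‖ * ‖x‖) := by
            exact mul_le_mul_of_nonneg_left ((hb1 _).trans (B.le_opNorm x)) h8
        _ = 8 / ρ * ‖B‖ * ‖x‖ := (mul_assoc _ _ _).symm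
    refine ⟨LinearMap.mkContinuous
      { toFun := fun x => JT (χb (B x))
        map_add' := by
          intro x y
          show JT (χb (B (x + y))) = JT (χb (B x)) + JT (χb (B y))
          rw [map_add, map_add, hJTadd _ (hrange _) _ (hrange _)]
        map_smul' := by
          intro c x
          show JT (χb (B (c • x))) = c • JT (χb (B x))
          rw [map_smul, map_smul, hJTsmul c _ (hrange _)] }
      (8 / ρ * ‖B‖) hbd, fun x => rfl, ?_⟩
    exact LinearMap.mkContinuous_norm_le _ (by positivity) _
  obtain ⟨Q, hQdef, hQnorm⟩ := key (W * χb)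
  obtain ⟨P, hPdef, hPnorm⟩ := key (W * χ)
  obtain ⟨Rop, hRdef, hRnorm⟩ := key χb
  have hRdef' : ∀ x, Rop x = JT (χb (χb x)) := hRdef
  have hRn : ‖Rop‖ ≤ 8 / ρ := by
    calc ‖Rop‖ ≤ 8 / ρ * ‖χb‖ := hRnorm
      _ ≤ 8 / ρ * 1 := by
          exact mul_le_mul_of_nonneg_left hnχb (by positivity)
      _ = 8 / ρ := mul_one _
  -- the small parameter
  set r : ℝ := 8 / ρ * ‖W‖ with hrdef
  have hr0 : 0 ≤ r := by positivity
  have hr1 : r < 1 := by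
    have : 8 / ρ * ‖W‖ < 8 / ρ * (ρ / 8) :=
      mul_lt_mul_of_pos_left hW (by positivity)
    have h2 : 8 / ρ * (ρ / 8) = 1 := by field_simp
    rw [hrdef]; linarith
  have hWχb : ‖W * χb‖ ≤ ‖W‖ :=
    le_trans (norm_mul_le _ _) (mul_le_of_le_one_right (norm_nonneg W) hnχb)
  have hWχ : ‖W * χ‖ ≤ ‖W‖ :=
    le_trans (norm_mul_le _ _) (mul_le_of_le_one_right (norm_nonneg W) hnχ)
  have hQr : ‖Q‖ ≤ r := by
    refine hQnorm.trans ?_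
    exact mul_le_mul_of_nonneg_left hWχb (by positivity)
  have hPr : ‖P‖ ≤ r := by
    refine hPnorm.trans ?_
    exact mul_le_mul_of_nonneg_left hWχ (by positivity)
  have hAr : ‖Rop * W‖ ≤ r := by
    refine (norm_mul_le _ _).trans ?_
    exact mul_le_mul_of_nonneg_right hRn (norm_nonneg W) |>.trans le_rfl
  have hQ1 : ‖-Q‖ < 1 := by rw [norm_neg]; exact lt_of_le_of_lt hQr hr1
  have hA1 : ‖-(Rop * W)‖ < 1 := by rw [norm_neg]; exact lt_of_le_of_lt hAr hr1
  -- Neumann series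
  set NN : 𝓗 →L[ℂ] 𝓗 := ∑' n : ℕ, (-Q) ^ n with hNNdef
  set V : 𝓗 →L[ℂ] 𝓗 := ∑' n : ℕ, (-(Rop * W)) ^ n with hVdef
  have hNQ1 : NN * (1 + Q) = 1 := by
    have := geom_series_mul_neg (-Q) hQ1
    rwa [sub_neg_eq_add] at this
  have hQN1 : (1 + Q) * NN = 1 := by
    have := mul_neg_geom_series (-Q) hQ1
    rwa [sub_neg_eq_add] at this
  have hVA1 : V * (1 + Rop * W) = 1 := by
    have := geom_series_mul_neg (-(Rop * W)) hA1
    rwa [sub_neg_eq_add] at this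
  have hAV1 : (1 + Rop * W) * V = 1 := by
    have := mul_neg_geom_series (-(Rop * W)) hA1
    rwa [sub_neg_eq_add] at this
  -- identities
  have hTQ : ∀ x, T (Q x) = χb (W (χb x)) := by
    intro x
    rw [hQdef]
    exact hJTleft _ (hrange _)
  have hQmem : ∀ x, Q x ∈ M := by
    intro x; rw [hQdef]; exact hJTmem _ (hrange _)
  have hNmem : ∀ x ∈ M, NN x ∈ M := by
    intro x hx
    have h1 : NN x + Q (NN x) = x := by
      have := congrArg (fun S : 𝓗 →L[ℂ] 𝓗 => S x) hQN1
      simpa [ContinuousLinearMap.mul_apply, ContinuousLinearMap.add_apply,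
        ContinuousLinearMap.one_apply] using this
    rw [eq_sub_of_add_eq h1]
    exact hsubM x hx _ (hQmem _)
  -- the inverse J
  have hHmaps : Set.MapsTo (T + χb * W * χb) M M := by
    intro x hx
    have : (T + χb * W * χb) x = T x + χb (W (χb x)) := by
      simp [ContinuousLinearMap.add_apply, ContinuousLinearMap.mul_apply]
    rw [this]
    exact hadd _ (hTbij.mapsTo hx) _ (hrange _)
  have hJleft : ∀ x ∈ M, (T + χb * W * χb) (NN (JT x)) = x := by
    intro x hx
    have h1 : NN (JT x) + Q (NN (JT x)) = JT x := by
      have := congrArg (fun S : 𝓗 →L[ℂ] 𝓗 => S (JT x)) hQN1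
      simpa [ContinuousLinearMap.mul_apply, ContinuousLinearMap.add_apply,
        ContinuousLinearMap.one_apply] using this
    calc (T + χb * W * χb) (NN (JT x))
        = T (NN (JT x)) + χb (W (χb (NN (JT x)))) := by
          simp [ContinuousLinearMap.add_apply, ContinuousLinearMap.mul_apply]
      _ = T (NN (JT x)) + T (Q (NN (JT x))) := by rw [hTQ]
      _ = T (NN (JT x) + Q (NN (JT x))) := (map_add T _ _).symm
      _ = T (JT x) := by rw [h1]
      _ = x := hJTleft x hx
  have hJright : ∀ x ∈ M, NN (JT ((T + χb * W * χb) x)) = x := by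
    intro x hx
    have hQx : Q x = JT (χb (W (χb x))) := hQdef x
    have h0 : (T + χb * W * χb) x = T x + χb (W (χb x)) := by
      simp [ContinuousLinearMap.add_apply, ContinuousLinearMap.mul_apply]
    have h1 : JT (T x + χb (W (χb x))) = x + Q x := by
      rw [hJTadd _ (hTbij.mapsTo hx) _ (hrange _), hJTright x hx, hQx]
    have h2 : NN (x + Q x) = x := by
      have := congrArg (fun S : 𝓗 →L[ℂ] 𝓗 => S x) hNQ1
      simpa [ContinuousLinearMap.mul_apply, ContinuousLinearMap.add_apply,
        ContinuousLinearMap.one_apply] using this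
    rw [h0, h1, h2]
  refine ⟨hHmaps, ⟨hHmaps, ?_, ?_⟩, fun x => NN (JT x), ?_, ?_, ?_, ?_, Rop, hRdef', ?_, ?_⟩
  · -- injective on M
    intro x hx y hy hxy
    rw [← hJright x hx, ← hJright y hy, hxy]
  · -- surjective onto M
    intro y hy
    exact ⟨NN (JT y), hNmem _ (hJTmem y hy), hJleft y hy⟩
  · -- membership of J
    intro x hx
    exact hNmem _ (hJTmem x hx)
  · -- left inverse
    exact hJleft
  · -- right inverse
    exact hJright
  · -- bound
    refine ⟨‖NN‖ * (8 / ρ), by positivity, ?_⟩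
    intro x hx
    calc ‖NN (JT x)‖ ≤ ‖NN‖ * ‖JT x‖ := NN.le_opNorm _
      _ ≤ ‖NN‖ * (8 / ρ * ‖x‖) :=
          mul_le_mul_of_nonneg_left (hJTbound x hx) (norm_nonneg NN)
      _ = ‖NN‖ * (8 / ρ) * ‖x‖ := (mul_assoc _ _ _).symm
  · -- summability
    have hpow : ∀ n : ℕ, ‖(Rop * W) ^ n‖ ≤ r ^ n := by
      intro n
      induction n with
      | zero => simpa using (show ‖(1 : 𝓗 →L[ℂ] 𝓗)‖ ≤ 1 from ContinuousLinearMap.norm_id_le)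
      | succ n ih =>
          calc ‖(Rop * W) ^ (n + 1)‖ = ‖(Rop * W) ^ n * (Rop * W)‖ := by rw [pow_succ]
            _ ≤ ‖(Rop * W) ^ n‖ * ‖Rop * W‖ := norm_mul_le _ _
            _ ≤ r ^ n * r := mul_le_mul ih hAr (norm_nonneg _) (pow_nonneg hr0 n)
            _ = r ^ (n + 1) := (pow_succ r n).symm
    have hbound : ∀ n : ℕ, ‖χ * W * (Rop * W) ^ n * χ‖ ≤ ‖W‖ * r ^ n := by
      intro n
      calc ‖χ * W * (Rop * W) ^ n * χ‖ ≤ ‖χ * W * (Rop * W) ^ n‖ * ‖χ‖ := norm_mul_le _ _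
        _ ≤ ‖χ * W * (Rop * W) ^ n‖ * 1 :=
            mul_le_mul_of_nonneg_left hnχ (norm_nonneg _)
        _ = ‖χ * W * (Rop * W) ^ n‖ := mul_one _
        _ ≤ ‖χ * W‖ * ‖(Rop * W) ^ n‖ := norm_mul_le _ _
        _ ≤ (1 * ‖W‖) * r ^ n := by
            refine mul_le_mul ?_ (hpow n) (norm_nonneg _) (by positivity)
            exact (norm_mul_le _ _).trans (mul_le_mul_of_nonneg_right hnχ (norm_nonneg W))
        _ = ‖W‖ * r ^ n := by rw [one_mul]
    exact Summable.of_nonneg_of_le (fun n => norm_nonneg _) hbound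
      ((summable_geometric_of_lt_one hr0 hr1).mul_left ‖W‖)
  · -- the Feshbach operator and its Neumann expansion
    have hχbQ : ∀ x, χb (Q x) = Rop (W (χb x)) := by
      intro x
      rw [hQdef, hRdef', ← hJTχb _ (hrange _)]
      rfl
    have hχbP : ∀ x, χb (P x) = Rop (W (χ x)) := by
      intro x
      rw [hPdef, hRdef', ← hJTχb _ (hrange _)]
      rfl
    have e1 : χb * (1 + Q) = (1 + Rop * W) * χb := by
      ext x
      simp only [ContinuousLinearMap.mul_apply, ContinuousLinearMap.add_apply,
        ContinuousLinearMap.one_apply, map_add]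
      rw [hχbQ]
    have e3 : χb * P = Rop * W * χ := by
      ext x
      simp only [ContinuousLinearMap.mul_apply]
      rw [hχbP]
    have e2 : V * χb = χb * NN := by
      calc V * χb = V * χb * ((1 + Q) * NN) := by rw [hQN1, mul_one]
        _ = V * (χb * (1 + Q)) * NN := by rw [← mul_assoc, mul_assoc V χb (1 + Q)]
        _ = V * ((1 + Rop * W) * χb) * NN := by rw [e1]
        _ = V * (1 + Rop * W) * χb * NN := by rw [← mul_assoc V (1 + Rop * W) χb]
        _ = χb * NN := by rw [hVA1, one_mul]
    have e4 : V = 1 - V * (Rop * W) := by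
      have h := hVA1
      rw [mul_add, mul_one] at h
      exact eq_sub_of_add_eq h
    have e5 : χ * W * χb * NN * P = χ * W * (V * (Rop * W)) * χ := by
      rw [mul_assoc (χ * W) χb NN, ← e2, mul_assoc (χ * W) (V * χb) P,
        mul_assoc V χb P, e3, ← mul_assoc V (Rop * W) χ,
        ← mul_assoc (χ * W) (V * (Rop * W)) χ]
    have e6 : χ * W * V * χ = χ * W * χ - χ * W * (V * (Rop * W)) * χ := by
      have h6 : χ * W * (1 - V * (Rop * W)) * χ
          = χ * W * χ - χ * W * (V * (Rop * W)) * χ := by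
        rw [mul_sub, mul_one, sub_mul]
      rw [← e4] at h6
      exact h6
    refine ⟨T + χ * W * χ - χ * W * χb * NN * P, ?_, ?_⟩
    · intro v
      simp only [ContinuousLinearMap.sub_apply, ContinuousLinearMap.add_apply,
        ContinuousLinearMap.mul_apply]
      rw [hPdef]
      rfl
    · have hterm : ∀ n : ℕ, ((-1 : ℂ) ^ n) • (χ * W * (Rop * W) ^ n * χ)
          = χ * W * (-(Rop * W)) ^ n * χ := by
        intro n
        rw [← neg_one_smul ℂ (Rop * W), smul_pow, mul_smul_comm, smul_mul_assoc]
      have hgeom := (summable_geometric_of_norm_lt_one hA1).hasSum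
      have hS : HasSum (fun n : ℕ => χ * W * (-(Rop * W)) ^ n * χ) (χ * W * V * χ) := by
        have h := (hgeom.mul_left (χ * W)).mul_right χ
        rw [← hVdef] at h
        exact h
      have hval : χ * W * V * χ = (T + χ * W * χ - χ * W * χb * NN * P) - T := by
        have h7 : (T + χ * W * χ - χ * W * χb * NN * P) - T
            = χ * W * χ - χ * W * χb * NN * P := by abel
        rw [h7, e5]
        exact e6
      have final : HasSum (fun n : ℕ => ((-1 : ℂ) ^ n) • (χ * W * (Rop * W) ^ n * χ))
          (χ * W * V * χ) := by
        simp only [hterm]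
        exact hS
      rwa [hval] at final
end

section
/- Let E be a finite-dimensional complex inner product space of dimension d₀ ≥ 1 and let Z be a selfadjoint endomorphism of E whose smallest eigenvalue ε⁽²⁾ is a simple eigenvalue and whose every other eigenvalue λ satisfies λ − ε⁽²⁾ ≥ 1. Let P be the orthogonal projection onto the ε⁽²⁾-eigenspace of Z. Let χ : ℝ → ℝ satisfy 0 ≤ χ ≤ 1 and χ(r) = 1 for all r ≤ 3/4. Let 0 < δ₀ < π/2, set c_{δ₀} := 1 if δ₀ ≤ π/4 and c_{δ₀} := sin(π − 2δ₀) if δ₀ > π/4, and let S_{δ₀} be the set of nonzero complex numbers z with |arg z| < δ₀ or |arg(−z)| < δ₀. Let ρ₀, ρ₁ ∈ (0, 1/2], ε_at ∈ ℝ, and let g ∈ S_{δ₀} satisfy ρ₀^{−1}|g|² < (1/4)/(‖Z‖ + c_{δ₀}) and ρ₁ρ₀ ≤ |g|² c_{δ₀}. Let z ∈ ℂ satisfy |z − (ε_at + g² ε⁽²⁾)| < ρ₀ρ₁/2, and for r ∈ ℝ define the endomorphism X(r) := ρ₀^{−1}((ε_at − z + ρ₀ r)·Id + χ(r)² g² Z)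 of E. Then: (a) for every r ∈ [0,1] and every η in the orthogonal complement of Ran P, one has ‖X(r)η‖ ≥ (ρ₁/4)‖η‖; and (b) for every r ∈ [3ρ₁/4, 1] and every η ∈ Ran P, one has ‖X(r)η‖ ≥ (ρ₁/4)‖η‖. -/
open Real

lemma tri_aux (x y : ℂ) : ‖x‖ - ‖y‖ ≤ ‖x + y‖ := by
  have h := norm_add_le (x + y) (-y)
  rw [add_neg_cancel_right, norm_neg] at h
  linarith


lemma cone_aux (δ₀ : ℝ) (hδ1 : 0 < δ₀) (hδ2 : δ₀ < π / 2)
    (c : ℝ) (hc : c = if δ₀ ≤ π / 4 then 1 else Real.sin (π - 2 * δ₀))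
    (g : ℂ) (hg0 : g ≠ 0) (hgS : |g.arg| < δ₀ ∨ |(-g).arg| < δ₀)
    (t μ : ℝ) (ht : 0 ≤ t) (hμ : 0 ≤ μ) :
    c * (‖g‖ ^ 2 * μ) ≤ ‖(t : ℂ) + g ^ 2 * (μ : ℂ)‖ := by
  obtain ⟨h, hharg, hsq⟩ : ∃ h : ℂ, |h.arg| < δ₀ ∧ h ^ 2 = g ^ 2 := by
    rcases hgS with h1 | h2
    · exact ⟨g, h1, rfl⟩
    · exact ⟨-g, h2, by ring⟩
  have habs : ‖h‖ = ‖g‖ := by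
    have : ‖h‖ ^ 2 = ‖g‖ ^ 2 := by
      rw [← norm_pow, ← norm_pow, hsq]
    nlinarith [norm_nonneg h, norm_nonneg g]
  set θ := h.arg with hθ
  set A := ‖g‖ ^ 2 with hA
  have hA0 : 0 ≤ A := by positivity
  have hθδ := abs_lt.mp hharg
  have hc1 : c ≤ 1 := by
    rw [hc]; split_ifs
    · exact le_refl 1
    · exact Real.sin_le_one _
  have hc0 : 0 < c := by
    rw [hc]; split_ifs with hcase
    · norm_num
    · apply Real.sin_pos_of_pos_of_lt_pi
      · linarith
      · linarith [Real.pi_pos]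
  have hgexp : g ^ 2 = (A : ℂ) * Complex.exp ((2 * θ : ℝ) * Complex.I) := by
    have h2 : ((2 * θ : ℝ) : ℂ) * Complex.I = θ * Complex.I + θ * Complex.I := by
      push_cast; ring
    rw [h2, Complex.exp_add, ← hsq]
    conv_lhs => rw [← Complex.norm_mul_exp_arg_mul_I h]
    rw [← hθ, hA, ← habs]
    push_cast
    ring
  have hre : (g ^ 2).re = A * Real.cos (2 * θ) := by
    rw [hgexp, Complex.re_ofReal_mul, Complex.exp_ofReal_mul_I_re]
  have him : (g ^ 2).im = A * Real.sin (2 * θ) := by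
    rw [hgexp, Complex.im_ofReal_mul, Complex.exp_ofReal_mul_I_im]
  set u : ℂ := (t : ℂ) + g ^ 2 * (μ : ℂ) with hu
  have hure : u.re = t + A * Real.cos (2 * θ) * μ := by
    simp [hu, Complex.add_re, Complex.mul_re, hre, him]
  have huim : u.im = A * Real.sin (2 * θ) * μ := by
    simp [hu, Complex.add_im, Complex.mul_im, hre, him]
  by_cases hcos : 0 ≤ Real.cos (2 * θ)
  · have h1 : A * μ ≤ ‖u‖ := by
      rw [Complex.norm_def, Complex.normSq_apply]
      rw [Real.le_sqrt (by positivity) (by nlinarith [sq_nonneg u.re, sq_nonneg u.im])]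
      have hs : Real.sin (2*θ)^2 + Real.cos (2*θ)^2 = 1 := Real.sin_sq_add_cos_sq _
      rw [hure, huim]
      nlinarith [mul_nonneg (mul_nonneg hA0 hcos) hμ, sq_nonneg (A * Real.sin (2*θ) * μ)]
    nlinarith [mul_nonneg hA0 hμ]
  · push_neg at hcos
    have hδ4 : π / 4 < δ₀ := by
      by_contra hle
      push_neg at hle
      have : 0 ≤ Real.cos (2 * θ) := by
        apply Real.cos_nonneg_of_mem_Icc
        constructor
        · linarith
        · linarith
      linarith
    have hcval : c = Real.sin (π - 2 * δ₀) := by rw [hc, if_neg (by linarith)]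
    have hθabs : |2 * θ| < 2 * δ₀ := by
      rw [abs_mul, abs_two]
      have := abs_nonneg θ
      linarith
    have hθabs' := abs_lt.mp hθabs
    have hhalf : π / 2 < |2 * θ| := by
      by_contra hle
      push_neg at hle
      obtain ⟨hl1, hl2⟩ := abs_le.mp hle
      have : 0 ≤ Real.cos (2 * θ) := by
        apply Real.cos_nonneg_of_mem_Icc
        exact ⟨by linarith, by linarith⟩
      linarith
    have hpi := Real.pi_pos
    have hsin : Real.sin (π - 2 * δ₀) ≤ |Real.sin (2 * θ)| := by
      have e1 : |Real.sin (2 * θ)| = Real.sin |2 * θ| := by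
        rcases le_or_gt 0 θ with h0 | h0
        · rw [abs_of_nonneg (by linarith : (0:ℝ) ≤ 2 * θ), abs_of_nonneg]
          apply Real.sin_nonneg_of_nonneg_of_le_pi
          · linarith
          · linarith
        · rw [abs_of_neg (by linarith : 2 * θ < 0), Real.sin_neg, abs_of_nonpos]
          exact le_of_lt (Real.sin_neg_of_neg_of_neg_pi_lt (by linarith) (by linarith))
      rw [e1, ← Real.sin_pi_sub |2 * θ|]
      rcases abs_cases (2 * θ) with ⟨he, _⟩ | ⟨he, _⟩ <;>
      · apply (Real.strictMonoOn_sin.monotoneOn)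
        · exact ⟨by linarith, by linarith⟩
        · exact ⟨by linarith, by linarith⟩
        · linarith
    calc c * (A * μ) = Real.sin (π - 2*δ₀) * (A * μ) := by rw [hcval]
      _ ≤ |Real.sin (2*θ)| * (A * μ) := by
          apply mul_le_mul_of_nonneg_right hsin (by positivity)
      _ = |u.im| := by rw [huim, abs_mul, abs_mul, abs_of_nonneg hA0, abs_of_nonneg hμ]; ring
      _ ≤ ‖u‖ := Complex.abs_im_le_norm u

set_option maxHeartbeats 4000000 in
/-- **Fiberwise invertibility bounds for the free approximation to the first Feshbach
operator.** Let `Z` be a selfadjoint endomorphism of a finite-dimensional complex inner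
product space with simple smallest eigenvalue `ε2` and all other eigenvalues at least
`ε2 + 1`, `P` the orthogonal projection onto the `ε2`-eigenspace, `χ` a cutoff with
`0 ≤ χ ≤ 1` and `χ = 1` on `(−∞, 3/4]`. For `g` in the cone `S_{δ₀}` with
`ρ₀⁻¹|g|² < (1/4)/(‖Z‖ + c_{δ₀})`, `ρ₁ρ₀ ≤ |g|² c_{δ₀}`, and
`|z − (ε_at + g²ε2)| < ρ₀ρ₁/2`, the operator
`X(r) = ρ₀⁻¹((ε_at − z + ρ₀r)·Id + χ(r)²g²Z)` satisfies `‖X(r)η‖ ≥ (ρ₁/4)‖η‖`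
for `r ∈ [0,1]`, `η ⟂ Ran P`, and for `r ∈ [3ρ₁/4, 1]`, `η ∈ Ran P`. -/
theorem free_approximation_fiber_bounds
    {E : Type*} [NormedAddCommGroup E] [InnerProductSpace ℂ E] [FiniteDimensional ℂ E]
    (hdim : 1 ≤ Module.finrank ℂ E)
    (Z : E →L[ℂ] E) (hZsa : IsSelfAdjoint Z)
    (ε2 : ℝ)
    (hev : Module.End.HasEigenvalue (Z : E →ₗ[ℂ] E) (ε2 : ℂ))
    (hsimple : Module.finrank ℂ (Module.End.eigenspace (Z : E →ₗ[ℂ] E) (ε2 : ℂ)) = 1)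
    (hmin : ∀ c : ℂ, Module.End.HasEigenvalue (Z : E →ₗ[ℂ] E) c → ε2 ≤ c.re)
    (hgap : ∀ c : ℂ, Module.End.HasEigenvalue (Z : E →ₗ[ℂ] E) c → c ≠ (ε2 : ℂ) →
      1 ≤ c.re - ε2)
    (P : E →L[ℂ] E)
    (hP : P = (Module.End.eigenspace (Z : E →ₗ[ℂ] E) (ε2 : ℂ)).subtypeL ∘L
      Submodule.orthogonalProjectionOnto (Module.End.eigenspace (Z : E →ₗ[ℂ] E) (ε2 : ℂ)))
    (χ : ℝ → ℝ) (hχ0 : ∀ r, 0 ≤ χ r) (hχ1 : ∀ r, χ r ≤ 1)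
    (hχone : ∀ r : ℝ, r ≤ 3 / 4 → χ r = 1)
    (δ₀ : ℝ) (hδ1 : 0 < δ₀) (hδ2 : δ₀ < π / 2)
    (c : ℝ) (hc : c = if δ₀ ≤ π / 4 then 1 else Real.sin (π - 2 * δ₀))
    (ρ₀ ρ₁ : ℝ) (hρ₀ : ρ₀ ∈ Set.Ioc (0 : ℝ) (1 / 2)) (hρ₁ : ρ₁ ∈ Set.Ioc (0 : ℝ) (1 / 2))
    (εat : ℝ)
    (g : ℂ) (hg0 : g ≠ 0) (hgS : |g.arg| < δ₀ ∨ |(-g).arg| < δ₀)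
    (hg1 : ρ₀⁻¹ * ‖g‖ ^ 2 < (1 / 4) / (‖Z‖ + c))
    (hg2 : ρ₁ * ρ₀ ≤ ‖g‖ ^ 2 * c)
    (z : ℂ) (hz : ‖z - ((εat : ℂ) + g ^ 2 * (ε2 : ℂ))‖ < ρ₀ * ρ₁ / 2)
    (X : ℝ → (E →L[ℂ] E))
    (hX : ∀ r : ℝ, X r = ((ρ₀ : ℂ))⁻¹ •
      (((εat : ℂ) - z + ((ρ₀ * r : ℝ) : ℂ)) • (1 : E →L[ℂ] E) +
        (((χ r : ℝ) : ℂ) ^ 2 * g ^ 2) • Z)) :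
    (∀ r ∈ Set.Icc (0 : ℝ) 1, ∀ η ∈ (LinearMap.range (P : E →ₗ[ℂ] E))ᗮ,
      ρ₁ / 4 * ‖η‖ ≤ ‖X r η‖) ∧
    (∀ r ∈ Set.Icc (3 * ρ₁ / 4) 1, ∀ η ∈ LinearMap.range (P : E →ₗ[ℂ] E),
      ρ₁ / 4 * ‖η‖ ≤ ‖X r η‖) := by
  obtain ⟨hρ₀pos, hρ₀le⟩ := hρ₀
  obtain ⟨hρ₁pos, hρ₁le⟩ := hρ₁
  have hZ0 : (0:ℝ) ≤ ‖Z‖ := norm_nonneg _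
  have hc1 : c ≤ 1 := by
    rw [hc]; split_ifs
    · exact le_refl 1
    · exact Real.sin_le_one _
  have hc0 : 0 < c := by
    rw [hc]; split_ifs with hcase
    · norm_num
    · apply Real.sin_pos_of_pos_of_lt_pi
      · linarith
      · linarith [Real.pi_pos]
  have hZc : 0 < ‖Z‖ + c := by linarith
  set A := ‖g‖ ^ 2 with hA
  have hA0 : 0 ≤ A := by positivity
  obtain ⟨W, hW⟩ : ∃ W : ℝ, ‖Z‖ + c = W := ⟨_, rfl⟩
  have hW0 : 0 < W := hW ▸ hZc
  have hWne : W ≠ 0 := ne_of_gt hW0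
  rw [hW] at hg1
  have hg1' : A * W < ρ₀ / 4 := by
    have h3 : 0 < ρ₀ * W := mul_pos hρ₀pos hW0
    have h4 := mul_lt_mul_of_pos_right hg1 h3
    have h1 : ρ₀⁻¹ * A * (ρ₀ * W) = A * W := by field_simp
    have h2 : (1/4)/W * (ρ₀ * W) = ρ₀ / 4 := by field_simp
    rw [h1, h2] at h4
    exact h4
  have hsplit : A * W = A * ‖Z‖ + A * c := by rw [← hW]; ring
  have hAZ : A * ‖Z‖ < ρ₀ / 4 := by nlinarith [mul_nonneg hA0 hc0.le]
  have hρ₁4 : ρ₁ < 1/4 := by nlinarith [mul_nonneg hA0 hZ0]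
  have heig : ∀ lam : ℝ, Module.End.HasEigenvalue (Z : E →ₗ[ℂ] E) (lam : ℂ) → |lam| ≤ ‖Z‖ := by
    intro lam hlam
    obtain ⟨v, hv⟩ := hlam.exists_hasEigenvector
    have hv1 : Z v = (lam : ℂ) • v := Module.End.mem_eigenspace_iff.mp hv.1
    have hZv : ‖(lam:ℂ) • v‖ ≤ ‖Z‖ * ‖v‖ := by rw [← hv1]; exact Z.le_opNorm v
    rw [norm_smul, Complex.norm_real, Real.norm_eq_abs] at hZv
    have hvpos : 0 < ‖v‖ := norm_pos_iff.mpr hv.2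
    exact le_of_mul_le_mul_right hZv hvpos
  have hε2 : |ε2| ≤ ‖Z‖ := heig ε2 hev
  have habse : ‖(εat:ℂ) - z + g^2 * (ε2:ℂ)‖ < ρ₀*ρ₁/2 := by
    have heq : (εat:ℂ) - z + g^2*(ε2:ℂ) = -(z - ((εat:ℂ) + g^2*(ε2:ℂ))) := by ring
    rw [heq, norm_neg]; exact hz
  -- the key scalar bound
  have key : ∀ r lam : ℝ, 0 ≤ r → r ≤ 1 → |lam| ≤ ‖Z‖ →
      ((1 ≤ lam - ε2) ∨ (3*ρ₁/4 ≤ r ∧ lam = ε2)) →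
      ρ₀ * ρ₁ / 4 ≤
        ‖((εat:ℂ) - z + ((ρ₀ * r : ℝ):ℂ)) + ((χ r : ℝ):ℂ)^2 * g^2 * (lam:ℂ)‖ := by
    intro r lam hr0 hr1 hlamZ hcase
    rcases le_or_gt r (3/4) with hr34 | hr34
    · have hχr : χ r = 1 := hχone r hr34
      have hdecomp : ((εat:ℂ) - z + ((ρ₀ * r : ℝ):ℂ)) + ((χ r : ℝ):ℂ)^2 * g^2 * (lam:ℂ)
          = ((((ρ₀*r : ℝ):ℂ) + g^2 * ((lam - ε2 : ℝ):ℂ)) + ((εat:ℂ) - z + g^2*(ε2:ℂ))) := by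
        rw [hχr]; push_cast; ring
      rw [hdecomp]
      have htri := tri_aux (((ρ₀*r : ℝ):ℂ) + g^2 * ((lam - ε2 : ℝ):ℂ))
        ((εat:ℂ) - z + g^2*(ε2:ℂ))
      rcases hcase with hgap1 | ⟨hrρ, hlam⟩
      · have hcone := cone_aux δ₀ hδ1 hδ2 c hc g hg0 hgS (ρ₀*r) (lam - ε2)
          (mul_nonneg hρ₀pos.le hr0) (by linarith)
        rw [← hA] at hcone
        have h5 : ρ₁*ρ₀ ≤ c * (A * (lam - ε2)) := by
          nlinarith [mul_nonneg (mul_nonneg hc0.le hA0) (by linarith : (0:ℝ) ≤ lam - ε2 - 1)]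
        linarith [mul_pos hρ₀pos hρ₁pos]
      · subst hlam
        have h6 : ((lam - lam : ℝ):ℂ) = 0 := by norm_num
        rw [h6, mul_zero, add_zero] at htri ⊢
        have h7 : ‖((ρ₀*r:ℝ):ℂ)‖ = ρ₀ * r := by
          rw [Complex.norm_real, Real.norm_eq_abs]; exact abs_of_nonneg (mul_nonneg hρ₀pos.le hr0)
        have h8 : ρ₀ * (3*ρ₁/4) ≤ ρ₀ * r := mul_le_mul_of_nonneg_left hrρ hρ₀pos.le
        rw [h7] at htri
        linarith
    · have hdecomp : ((εat:ℂ) - z + ((ρ₀ * r : ℝ):ℂ)) + ((χ r : ℝ):ℂ)^2 * g^2 * (lam:ℂ)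
          = (((ρ₀*r : ℝ):ℂ) + (((εat:ℂ) - z + g^2*(ε2:ℂ))
              + g^2 * (((χ r)^2*lam - ε2 : ℝ):ℂ))) := by
        push_cast; ring
      rw [hdecomp]
      have habsw : ‖g^2 * (((χ r)^2*lam - ε2 : ℝ):ℂ)‖ ≤ A * (2*‖Z‖) := by
        rw [norm_mul, norm_pow, Complex.norm_real, Real.norm_eq_abs]
        have h7 : |(χ r)^2*lam - ε2| ≤ 2*‖Z‖ := by
          have h71 := abs_sub ((χ r)^2*lam) ε2
          have h72 : |(χ r)^2*lam| ≤ |lam| := by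
            rw [abs_mul]
            have : |(χ r)^2| ≤ 1 := by
              rw [abs_of_nonneg (by positivity)]
              nlinarith [hχ0 r, hχ1 r]
            nlinarith [abs_nonneg lam]
          linarith
        exact mul_le_mul_of_nonneg_left h7 hA0
      have htri := tri_aux ((ρ₀*r:ℝ):ℂ)
        (((εat:ℂ) - z + g^2*(ε2:ℂ)) + g^2 * (((χ r)^2*lam - ε2 : ℝ):ℂ))
      have h9 := norm_add_le ((εat:ℂ) - z + g^2*(ε2:ℂ))
        (g^2 * (((χ r)^2*lam - ε2 : ℝ):ℂ))
      have h10 : ‖((ρ₀*r:ℝ):ℂ)‖ = ρ₀ * r := by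
        rw [Complex.norm_real, Real.norm_eq_abs]; exact abs_of_nonneg (by positivity)
      rw [h10] at htri
      have h11 : ρ₀ * (3/4) ≤ ρ₀ * r := mul_le_mul_of_nonneg_left hr34.le hρ₀pos.le
      have h12 : ρ₀ * ρ₁ < ρ₀ * (1/4) := mul_lt_mul_of_pos_left hρ₁4 hρ₀pos
      linarith
  -- range of P
  set V := Module.End.eigenspace (Z : E →ₗ[ℂ] E) (ε2 : ℂ) with hV
  have hrangeP : LinearMap.range (P : E →ₗ[ℂ] E) = V := by
    apply le_antisymm
    · rintro x ⟨y, rfl⟩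
      rw [hP]
      simp only [ContinuousLinearMap.coe_coe, ContinuousLinearMap.comp_apply, Submodule.subtypeL_apply]
      exact Submodule.coe_mem _
    · intro x hx
      refine ⟨x, ?_⟩
      rw [hP]
      simp only [ContinuousLinearMap.coe_coe, ContinuousLinearMap.comp_apply, Submodule.subtypeL_apply]
      exact Submodule.starProjection_eq_self_iff.mpr hx
  have hρ₀inv : ‖((ρ₀:ℂ))⁻¹‖ = ρ₀⁻¹ := by
    rw [norm_inv, Complex.norm_real, Real.norm_eq_abs, abs_of_pos hρ₀pos]
  constructor
  · -- part (a)
    intro r hr η hη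
    rw [hrangeP] at hη
    have hsym : (Z : E →ₗ[ℂ] E).IsSymmetric := hZsa.isSymmetric
    set n := Module.finrank ℂ E with hn
    set b := hsym.eigenvectorBasis hn.symm with hb
    set lam := hsym.eigenvalues hn.symm with hlam
    have hcoord : ∀ i, b.repr (X r η) i =
        ((ρ₀:ℂ)⁻¹ * (((εat:ℂ) - z + ((ρ₀ * r : ℝ):ℂ)) + ((χ r : ℝ):ℂ)^2 * g^2 * (lam i:ℂ)))
          * b.repr η i := by
      intro i
      have hZcoord : b.repr (Z η) i = (lam i : ℂ) * b.repr η i := by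
        have h := hsym.eigenvectorBasis_apply_self_apply hn.symm η i
        simpa [ContinuousLinearMap.coe_coe] using h
      rw [hX r]
      simp only [ContinuousLinearMap.smul_apply, ContinuousLinearMap.add_apply,
        ContinuousLinearMap.one_apply, map_smul, map_add, PiLp.smul_apply, PiLp.add_apply,
        smul_eq_mul, hZcoord]
      ring
    have hvanish : ∀ i, lam i = ε2 → b.repr η i = 0 := by
      intro i hi
      rw [b.repr_apply_apply]
      have hbi : b i ∈ V := by
        have h := (hsym.hasEigenvector_eigenvectorBasis hn.symm i).1
        rw [← hlam, hi] at h
        exact h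
      exact (Submodule.mem_orthogonal V η).mp hη (b i) hbi
    have hpoint : ∀ i, ρ₁/4 * ‖b.repr η i‖ ≤ ‖b.repr (X r η) i‖ := by
      intro i
      by_cases hi : lam i = ε2
      · rw [hvanish i hi]
        simp
      · have hne : (lam i : ℂ) ≠ (ε2 : ℂ) := by
          intro hcontra
          exact hi (by exact_mod_cast hcontra)
        have hgapi : 1 ≤ lam i - ε2 := by
          have h := hgap (lam i : ℂ) (hsym.hasEigenvalue_eigenvalues hn.symm i) hne
          simpa using h
        have hZi : |lam i| ≤ ‖Z‖ := heig (lam i) (hsym.hasEigenvalue_eigenvalues hn.symm i)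
        have hkey := key r (lam i) hr.1 hr.2 hZi (Or.inl hgapi)
        rw [hcoord i, norm_mul, norm_mul, hρ₀inv]
        have h13 : ρ₁/4 ≤ ρ₀⁻¹ * 
            ‖((εat:ℂ) - z + ((ρ₀ * r : ℝ):ℂ)) + ((χ r : ℝ):ℂ)^2 * g^2 * (lam i:ℂ)‖ := by
          have h14 := mul_le_mul_of_nonneg_left hkey (inv_nonneg.mpr hρ₀pos.le)
          have h15 : ρ₀⁻¹ * (ρ₀ * ρ₁ / 4) = ρ₁/4 := by field_simp
          linarith
        exact mul_le_mul_of_nonneg_right h13 (norm_nonneg _)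
    have hnorm2 : ∀ ψ : E, ‖ψ‖^2 = ∑ i, ‖b.repr ψ i‖^2 := by
      intro ψ
      rw [← b.repr.norm_map ψ, EuclideanSpace.norm_eq,
        Real.sq_sqrt (Finset.sum_nonneg fun i _ => sq_nonneg _)]
    have hsum : (ρ₁/4 * ‖η‖)^2 ≤ ‖X r η‖^2 := by
      calc (ρ₁/4 * ‖η‖)^2 = ∑ i, (ρ₁/4 * ‖b.repr η i‖)^2 := by
            rw [mul_pow, hnorm2 η, Finset.mul_sum]
            simp [mul_pow]
        _ ≤ ∑ i, ‖b.repr (X r η) i‖^2 := Finset.sum_le_sum (fun i _ =>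
            pow_le_pow_left₀ (by positivity) (hpoint i) 2)
        _ = ‖X r η‖^2 := (hnorm2 _).symm
    have h := Real.sqrt_le_sqrt hsum
    rwa [Real.sqrt_sq (by positivity), Real.sqrt_sq (norm_nonneg _)] at h
  · -- part (b)
    intro r hr η hη
    rw [hrangeP] at hη
    have hZη : Z η = (ε2:ℂ) • η := Module.End.mem_eigenspace_iff.mp hη
    have hXη : X r η = ((ρ₀:ℂ)⁻¹ *
        (((εat:ℂ) - z + ((ρ₀ * r : ℝ):ℂ)) + ((χ r : ℝ):ℂ)^2 * g^2 * (ε2:ℂ))) • η := by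
      rw [hX r]
      simp only [ContinuousLinearMap.smul_apply, ContinuousLinearMap.add_apply,
        ContinuousLinearMap.one_apply, hZη, smul_smul]
      rw [← add_smul, smul_smul]
    have hr0 : (0:ℝ) ≤ r := by linarith [hr.1]
    have hkey := key r ε2 hr0 hr.2 hε2 (Or.inr ⟨hr.1, rfl⟩)
    rw [hXη, norm_smul, norm_mul, hρ₀inv]
    have h13 : ρ₁/4 ≤ ρ₀⁻¹ * 
        ‖((εat:ℂ) - z + ((ρ₀ * r : ℝ):ℂ)) + ((χ r : ℝ):ℂ)^2 * g^2 * (ε2:ℂ)‖ := by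
      have h14 := mul_le_mul_of_nonneg_left hkey (inv_nonneg.mpr hρ₀pos.le)
      have h15 : ρ₀⁻¹ * (ρ₀ * ρ₁ / 4) = ρ₁/4 := by field_simp
      linarith
    exact mul_le_mul_of_nonneg_right h13 (norm_nonneg _)
end

section
/- Let μ > 0, let d ∈ ℕ with d ≥ 1, let m, n ∈ ℕ with m + n ≥ 1, and let B₁ := {k ∈ ℝ³ : |k| ≤ 1} × {1,2} with |(𝐤,λ)| := |𝐤| and ρ·(𝐤,λ) := (ρ𝐤, λ). Let w : [0,1] × B₁^{m+n} → End(ℂ^d) be measurable and, for each fixed K ∈ B₁^{m+n}, continuous in the first variable, and define ‖w‖_μ := ( ∫_{B₁^{m+n}} sup_{r ∈ [0,1]} ‖w(r, K)‖² dK / ∏_{i=1}^{m+n} |k_i|^{3+2μ} )^{1/2}, where K = (k₁, …, k_{m+n}) and the integral is Lebesgue integration over the ℝ³-components and summation over the {1,2}-components. For ρ ∈ (0,1] define the rescaled kernel s_ρ(w)(r, K) := ρ^{(m+n)−1} w(ρ r, ρ K) (well defined since ρr ∈ [0,1] and ρK ∈ B₁^{m+n}). Then ‖s_ρ(w)‖_μ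 ≤ ρ^{μ(m+n)} ‖w‖_μ. -/
open MeasureTheory ENNReal
open scoped NNReal

/-- The measure on `(ℝ³ × {1,2})^mn`: product over the `mn` slots of
(Lebesgue measure on `ℝ³`) × (counting measure on the two polarizations). -/
noncomputable def kernelMeasure (mn : ℕ) :
    Measure (Fin mn → EuclideanSpace ℝ (Fin 3) × Fin 2) :=
  Measure.pi fun _ => (volume : Measure (EuclideanSpace ℝ (Fin 3))).prod Measure.count

/-- The norm `‖w‖_μ := (∫_{B₁^mn} sup_{r ∈ [0,1]} ‖w(r,K)‖² dK / ∏ᵢ |kᵢ|^{3+2μ})^{1/2}`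
of a matrix-valued integral kernel, valued in `[0,∞]`. -/
noncomputable def kernelNormMu (d : ℕ) (μ : ℝ) (mn : ℕ)
    (w : ℝ → (Fin mn → EuclideanSpace ℝ (Fin 3) × Fin 2) →
      (EuclideanSpace ℂ (Fin d) →L[ℂ] EuclideanSpace ℂ (Fin d))) : ℝ≥0∞ :=
  (∫⁻ K in {K : Fin mn → EuclideanSpace ℝ (Fin 3) × Fin 2 | ∀ i, ‖(K i).1‖ ≤ 1},
      (⨆ r ∈ Set.Icc (0 : ℝ) 1, (‖w r K‖₊ : ℝ≥0∞)) ^ 2 /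
        ∏ i, (‖(K i).1‖₊ : ℝ≥0∞) ^ ((3 : ℝ) + 2 * μ) ∂(kernelMeasure mn)) ^ ((1 : ℝ) / 2)

private lemma ennreal_div_scale {a x q : ℝ≥0∞} (hq0 : q ≠ 0) (hqt : q ≠ ⊤) :
    a / x = q * (a / (q * x)) := by
  rw [div_eq_mul_inv, div_eq_mul_inv, ENNReal.mul_inv (Or.inl hq0) (Or.inl hqt)]
  have h : q * (a * (q⁻¹ * x⁻¹)) = (q * q⁻¹) * (a * x⁻¹) := by ring
  rw [h, ENNReal.mul_inv_cancel hq0 hqt, one_mul]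

private lemma prod_smul_left' {α β : Type*} [MeasurableSpace α] [MeasurableSpace β]
    (c : ℝ≥0) (μ : Measure α) (ν : Measure β) [SigmaFinite μ] [SigmaFinite ν] :
    ((c : ℝ≥0∞) • μ).prod ν = (c : ℝ≥0∞) • (μ.prod ν) := by
  haveI : SigmaFinite ((c : ℝ≥0∞) • μ) := by rw [← ENNReal.smul_def]; infer_instance
  refine Measure.prod_eq fun s t hs ht => ?_
  simp [Measure.prod_prod, mul_assoc]
  rw [ENNReal.smul_def, smul_eq_mul]

private lemma pi_smul' {ι : Type*} [Fintype ι] {α : ι → Type*} [∀ i, MeasurableSpace (α i)]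
    (c : ℝ≥0) (ν : ∀ i, Measure (α i)) [∀ i, SigmaFinite (ν i)] :
    Measure.pi (fun i => (c : ℝ≥0∞) • ν i)
      = ((c : ℝ≥0∞) ^ Fintype.card ι) • Measure.pi ν := by
  haveI : ∀ i, SigmaFinite ((c : ℝ≥0∞) • ν i) := fun i => by
    rw [← ENNReal.smul_def]; infer_instance
  refine Measure.pi_eq fun s hs => ?_
  simp [Measure.pi_pi, Finset.prod_mul_distrib, Finset.prod_const, Finset.card_univ]


/-- **Contraction of integral kernels under rescaling.** For a measurable kernel
`w : [0,1] × B₁^{m+n} → End(ℂ^d)` (continuous in the field-energy variable) and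
`ρ ∈ (0,1]`, the rescaled kernel `s_ρ(w)(r, K) := ρ^{(m+n)−1} w(ρr, ρK)` satisfies
`‖s_ρ(w)‖_μ ≤ ρ^{μ(m+n)} ‖w‖_μ`. -/
theorem kernel_scaling_contraction (μ : ℝ) (hμ : 0 < μ) (d : ℕ) (hd : 1 ≤ d)
    (m n : ℕ) (hmn : 1 ≤ m + n)
    (w : ℝ → (Fin (m + n) → EuclideanSpace ℝ (Fin 3) × Fin 2) →
      (EuclideanSpace ℂ (Fin d) →L[ℂ] EuclideanSpace ℂ (Fin d)))
    (hmeas : Measurable (Function.uncurry w))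
    (hcont : ∀ K, ContinuousOn (fun r => w r K) (Set.Icc (0 : ℝ) 1))
    (ρ : ℝ) (hρ0 : 0 < ρ) (hρ1 : ρ ≤ 1) :
    kernelNormMu d μ (m + n)
      (fun r K => (ρ ^ (m + n - 1) : ℝ) • w (ρ * r) (fun i => (ρ • (K i).1, (K i).2)))
      ≤ ENNReal.ofReal ρ ^ (μ * (m + n) : ℝ) * kernelNormMu d μ (m + n) w := by
  classical
  have hρne : ρ ≠ 0 := hρ0.ne'
  set p : ℝ≥0∞ := ENNReal.ofReal ρ with hp
  have hp0 : p ≠ 0 := (ENNReal.ofReal_pos.mpr hρ0).ne'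
  have hpt : p ≠ ∞ := ENNReal.ofReal_ne_top
  have hp1 : p ≤ 1 := by simpa [hp] using ENNReal.ofReal_le_one.mpr hρ1
  -- the scaling measurable equivalence
  let e₁ : EuclideanSpace ℝ (Fin 3) ≃ᵐ EuclideanSpace ℝ (Fin 3) :=
    ⟨⟨fun x => ρ • x, fun x => ρ⁻¹ • x,
      fun x => by simp [smul_smul, inv_mul_cancel₀ hρne],
      fun x => by simp [smul_smul, mul_inv_cancel₀ hρne]⟩,
      measurable_const_smul ρ, measurable_const_smul ρ⁻¹⟩
  let e₀ : (EuclideanSpace ℝ (Fin 3) × Fin 2) ≃ᵐ (EuclideanSpace ℝ (Fin 3) × Fin 2) :=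
    e₁.prodCongr (MeasurableEquiv.refl (Fin 2))
  let e := MeasurableEquiv.piCongrRight (fun _ : Fin (m + n) => e₀)
  have hecoe : ∀ K : Fin (m + n) → EuclideanSpace ℝ (Fin 3) × Fin 2,
      e K = fun i => (ρ • (K i).1, (K i).2) := fun K => rfl
  -- measures
  set ν : Measure (EuclideanSpace ℝ (Fin 3) × Fin 2) :=
    (volume : Measure (EuclideanSpace ℝ (Fin 3))).prod Measure.count with hν
  haveI : IsFiniteMeasure (Measure.count : Measure (Fin 2)) :=
    ⟨by rw [Measure.count_apply_finite _ Set.finite_univ]; exact ENNReal.natCast_lt_top _⟩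
  set c₀ : ℝ≥0 := Real.toNNReal ((ρ ^ 3)⁻¹) with hc₀def
  have h1 : Measure.map (⇑e₁) (volume : Measure (EuclideanSpace ℝ (Fin 3)))
      = (c₀ : ℝ≥0∞) • volume := by
    have h := Measure.map_addHaar_smul (volume : Measure (EuclideanSpace ℝ (Fin 3))) hρne
    rw [show ⇑e₁ = (ρ • · : EuclideanSpace ℝ (Fin 3) → _) from rfl]
    rw [h]
    congr 1
    rw [show (c₀ : ℝ≥0∞) = ENNReal.ofReal ((ρ ^ 3)⁻¹) from rfl]
    congr 1
    rw [finrank_euclideanSpace, Fintype.card_fin, abs_of_pos (by positivity)]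
  have h2 : Measure.map (⇑e₀) ν = (c₀ : ℝ≥0∞) • ν := by
    have hmp : Measure.map (⇑e₀) ν
        = (Measure.map (⇑e₁) volume).prod (Measure.map id Measure.count) := by
      rw [Measure.map_prod_map _ _ e₁.measurable measurable_id]
      rfl
    rw [hmp, Measure.map_id, h1, prod_smul_left']
  haveI : SigmaFinite ((c₀ : ℝ≥0∞) • ν) := by rw [← ENNReal.smul_def]; infer_instance
  have h3 : Measure.map (⇑e) (kernelMeasure (m + n))
      = ((c₀ : ℝ≥0∞) ^ (m + n)) • kernelMeasure (m + n) := by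
    have hmp := measurePreserving_pi (fun _ : Fin (m + n) => ν)
      (fun _ : Fin (m + n) => (c₀ : ℝ≥0∞) • ν) (fun _ => ⟨e₀.measurable, h2⟩)
    have := hmp.map_eq
    rw [show (fun (a : Fin (m+n) → EuclideanSpace ℝ (Fin 3) × Fin 2) i => e₀ (a i)) = ⇑e
      from rfl] at this
    rw [show kernelMeasure (m + n) = Measure.pi (fun _ : Fin (m + n) => ν) from rfl, this,
      pi_smul', Fintype.card_fin]
  -- sets
  set B : Set (Fin (m + n) → EuclideanSpace ℝ (Fin 3) × Fin 2) :=
    {K | ∀ i, ‖(K i).1‖ ≤ 1} with hB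
  set B' : Set (Fin (m + n) → EuclideanSpace ℝ (Fin 3) × Fin 2) :=
    {K | ∀ i, ‖(K i).1‖ ≤ ρ} with hB'
  have hB'meas : MeasurableSet B' := by
    have : B' = ⋂ i, (fun K : Fin (m + n) → EuclideanSpace ℝ (Fin 3) × Fin 2
        => ‖(K i).1‖) ⁻¹' Set.Iic ρ := by
      ext K; simp [Set.mem_iInter, hB']
    rw [this]
    exact MeasurableSet.iInter fun i =>
      ((measurable_pi_apply i).fst.norm) measurableSet_Iic
  have hpreim : ⇑e ⁻¹' B' = B := by
    ext K
    simp only [Set.mem_preimage, hB, hB', Set.mem_setOf_eq, hecoe]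
    refine forall_congr' fun i => ?_
    rw [norm_smul, Real.norm_of_nonneg hρ0.le]
    exact mul_le_iff_le_one_right hρ0
  have hsub : B' ⊆ B := fun K h i => (h i).trans hρ1
  -- kernel functions
  set S : (Fin (m + n) → EuclideanSpace ℝ (Fin 3) × Fin 2) → ℝ≥0∞ :=
    fun K => ⨆ r ∈ Set.Icc (0 : ℝ) 1, (‖w r K‖₊ : ℝ≥0∞) with hS
  set D : (Fin (m + n) → EuclideanSpace ℝ (Fin 3) × Fin 2) → ℝ≥0∞ :=
    fun K => ∏ i, (‖(K i).1‖₊ : ℝ≥0∞) ^ ((3 : ℝ) + 2 * μ) with hDdef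
  set G : (Fin (m + n) → EuclideanSpace ℝ (Fin 3) × Fin 2) → ℝ≥0∞ :=
    fun K => S K ^ 2 / D K with hG
  set q' : ℝ≥0∞ := (p ^ ((3 : ℝ) + 2 * μ)) ^ (m + n) with hq'
  have hq'0 : q' ≠ 0 := pow_ne_zero _ (ENNReal.rpow_pos (ENNReal.ofReal_pos.mpr hρ0) hpt).ne'
  have hq't : q' ≠ ∞ := ENNReal.pow_ne_top (ENNReal.rpow_ne_top_of_nonneg (by positivity) hpt)
  have hρcoe : (‖ρ‖₊ : ℝ≥0∞) = p := by
    rw [← enorm_eq_nnnorm, ← ofReal_norm, Real.norm_of_nonneg hρ0.le]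
  have hD : ∀ K, D (e K) = q' * D K := by
    intro K
    have hfac : ∀ i : Fin (m + n),
        ((‖(e K i).1‖₊ : ℝ≥0∞)) ^ ((3 : ℝ) + 2 * μ)
          = (p ^ ((3 : ℝ) + 2 * μ)) * (‖(K i).1‖₊ : ℝ≥0∞) ^ ((3 : ℝ) + 2 * μ) := by
      intro i
      rw [show (e K i).1 = ρ • (K i).1 from rfl, nnnorm_smul, ENNReal.coe_mul,
        ENNReal.mul_rpow_of_nonneg _ _ (by positivity), hρcoe]
    rw [hDdef]
    simp only []
    rw [Finset.prod_congr rfl (fun i _ => hfac i), Finset.prod_mul_distrib,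
      Finset.prod_const, Finset.card_univ, Fintype.card_fin]
  -- pointwise bound
  have hpt2 : ∀ K,
      (⨆ r ∈ Set.Icc (0 : ℝ) 1,
          (‖(ρ ^ (m + n - 1) : ℝ) • w (ρ * r) (fun i => (ρ • (K i).1, (K i).2))‖₊ : ℝ≥0∞)) ^ 2
        / D K ≤ ((p ^ (m + n - 1)) ^ 2 * q') * G (e K) := by
    intro K
    have hsup : (⨆ r ∈ Set.Icc (0 : ℝ) 1,
        (‖(ρ ^ (m + n - 1) : ℝ) • w (ρ * r) (fun i => (ρ • (K i).1, (K i).2))‖₊ : ℝ≥0∞))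
          ≤ p ^ (m + n - 1) * S (e K) := by
      refine iSup₂_le fun r hr => ?_
      have hmem : ρ * r ∈ Set.Icc (0 : ℝ) 1 :=
        ⟨mul_nonneg hρ0.le hr.1, by nlinarith [hr.1, hr.2]⟩
      calc ((‖(ρ ^ (m + n - 1) : ℝ) • w (ρ * r) (fun i => (ρ • (K i).1, (K i).2))‖₊ : ℝ≥0)
            : ℝ≥0∞)
          = ENNReal.ofReal ‖(ρ ^ (m + n - 1) : ℝ) • w (ρ * r)
              (fun i => (ρ • (K i).1, (K i).2))‖ := (ofReal_norm _).symm
        _ ≤ ENNReal.ofReal (‖(ρ ^ (m + n - 1) : ℝ)‖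
              * ‖w (ρ * r) (fun i => (ρ • (K i).1, (K i).2))‖) :=
            ENNReal.ofReal_le_ofReal (ContinuousLinearMap.opNorm_smul_le _ _)
        _ = ENNReal.ofReal ‖(ρ ^ (m + n - 1) : ℝ)‖
              * ENNReal.ofReal ‖w (ρ * r) (fun i => (ρ • (K i).1, (K i).2))‖ :=
            ENNReal.ofReal_mul (norm_nonneg _)
        _ = p ^ (m + n - 1)
              * (‖w (ρ * r) (fun i => (ρ • (K i).1, (K i).2))‖₊ : ℝ≥0∞) := by
            rw [Real.norm_of_nonneg (by positivity), ENNReal.ofReal_pow hρ0.le,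
              ofReal_norm, enorm_eq_nnnorm]
        _ ≤ p ^ (m + n - 1) * S (e K) := by
            refine mul_le_mul_right ?_ _
            rw [hS]
            exact le_iSup₂ (f := fun (s : ℝ) (_ : s ∈ Set.Icc (0:ℝ) 1) =>
              (‖w s (e K)‖₊ : ℝ≥0∞)) (ρ * r) hmem
    calc (⨆ r ∈ Set.Icc (0 : ℝ) 1,
        (‖(ρ ^ (m + n - 1) : ℝ) • w (ρ * r) (fun i => (ρ • (K i).1, (K i).2))‖₊ : ℝ≥0∞)) ^ 2
          / D K
        ≤ (p ^ (m + n - 1) * S (e K)) ^ 2 / D K :=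
          ENNReal.div_le_div_right (pow_le_pow_left' hsup 2) _
      _ = (p ^ (m + n - 1)) ^ 2 * (S (e K) ^ 2 / D K) := by
          rw [mul_pow, mul_div_assoc]
      _ = (p ^ (m + n - 1)) ^ 2 * (q' * (S (e K) ^ 2 / D (e K))) := by
          rw [hD K, ← ennreal_div_scale hq'0 hq't]
      _ = ((p ^ (m + n - 1)) ^ 2 * q') * G (e K) := by rw [hG]; ring
  -- change of variables
  have hchg : ∫⁻ K in B, G (e K) ∂(kernelMeasure (m + n))
      ≤ ((c₀ : ℝ≥0∞) ^ (m + n)) * ∫⁻ K in B, G K ∂(kernelMeasure (m + n)) := by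
    have h4 : ∫⁻ K in B, G (e K) ∂(kernelMeasure (m + n))
        = ∫⁻ x in B', G x ∂(Measure.map (⇑e) (kernelMeasure (m + n))) := by
      rw [Measure.restrict_map e.measurable hB'meas, hpreim]
      exact (MeasureTheory.lintegral_map_equiv G e).symm
    rw [h4, h3, Measure.restrict_smul, lintegral_smul_measure]
    exact mul_le_mul_right (lintegral_mono_set hsub) _
  -- main estimate on the inner integral
  have key : (∫⁻ K in B,
      (⨆ r ∈ Set.Icc (0 : ℝ) 1,
          (‖(ρ ^ (m + n - 1) : ℝ) • w (ρ * r) (fun i => (ρ • (K i).1, (K i).2))‖₊ : ℝ≥0∞)) ^ 2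
        / D K ∂(kernelMeasure (m + n)))
      ≤ (((p ^ (m + n - 1)) ^ 2 * q') * (c₀ : ℝ≥0∞) ^ (m + n))
          * ∫⁻ K in B, G K ∂(kernelMeasure (m + n)) := by
    calc (∫⁻ K in B, (⨆ r ∈ Set.Icc (0 : ℝ) 1,
          (‖(ρ ^ (m + n - 1) : ℝ) • w (ρ * r) (fun i => (ρ • (K i).1, (K i).2))‖₊ : ℝ≥0∞)) ^ 2
            / D K ∂(kernelMeasure (m + n)))
        ≤ ∫⁻ K in B, ((p ^ (m + n - 1)) ^ 2 * q') * G (e K) ∂(kernelMeasure (m + n)) :=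
          lintegral_mono hpt2
      _ = ((p ^ (m + n - 1)) ^ 2 * q') * ∫⁻ K in B, G (e K) ∂(kernelMeasure (m + n)) :=
          lintegral_const_mul' _ _ (by
            exact ENNReal.mul_ne_top (ENNReal.pow_ne_top (ENNReal.pow_ne_top hpt)) hq't)
      _ ≤ ((p ^ (m + n - 1)) ^ 2 * q')
            * (((c₀ : ℝ≥0∞) ^ (m + n)) * ∫⁻ K in B, G K ∂(kernelMeasure (m + n))) :=
          mul_le_mul_right hchg _
      _ = (((p ^ (m + n - 1)) ^ 2 * q') * (c₀ : ℝ≥0∞) ^ (m + n))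
            * ∫⁻ K in B, G K ∂(kernelMeasure (m + n)) := by ring
  -- the constant
  set a : ℝ := ((m + n : ℕ) : ℝ) with ha
  have ha1 : (1 : ℝ) ≤ a := by rw [ha]; exact_mod_cast hmn
  have hc₀p : (c₀ : ℝ≥0∞) = p ^ (-3 : ℝ) := by
    rw [show (c₀ : ℝ≥0∞) = ENNReal.ofReal ((ρ ^ 3)⁻¹) from rfl,
      ENNReal.ofReal_inv_of_pos (by positivity), ENNReal.ofReal_pow hρ0.le,
      ← ENNReal.rpow_natCast p 3, ← ENNReal.rpow_neg]
    norm_num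
  have hconst : ((p ^ (m + n - 1)) ^ 2 * q') * (c₀ : ℝ≥0∞) ^ (m + n)
      = p ^ (2 * (a - 1) + ((3 : ℝ) + 2 * μ) * a + (-3) * a) := by
    rw [hc₀p, hq']
    rw [← ENNReal.rpow_natCast p (m + n - 1), ← ENNReal.rpow_natCast (p ^ (((m+n-1:ℕ)):ℝ)) 2,
      ← ENNReal.rpow_natCast (p ^ ((3:ℝ) + 2*μ)) (m + n),
      ← ENNReal.rpow_natCast (p ^ (-3:ℝ)) (m + n),
      ← ENNReal.rpow_mul, ← ENNReal.rpow_mul, ← ENNReal.rpow_mul,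
      ← ENNReal.rpow_add _ _ hp0 hpt, ← ENNReal.rpow_add _ _ hp0 hpt]
    congr 1
    have : ((m + n - 1 : ℕ) : ℝ) = a - 1 := by
      rw [ha]; push_cast [Nat.cast_sub hmn]; ring
    rw [this]
    push_cast [ha]
    ring
  have hconst_le : ((p ^ (m + n - 1)) ^ 2 * q') * (c₀ : ℝ≥0∞) ^ (m + n)
      ≤ p ^ (2 * (μ * a)) := by
    rw [hconst]
    exact ENNReal.rpow_le_rpow_of_exponent_ge hp1 (by nlinarith)
  have key2 : (∫⁻ K in B,
      (⨆ r ∈ Set.Icc (0 : ℝ) 1,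
          (‖(ρ ^ (m + n - 1) : ℝ) • w (ρ * r) (fun i => (ρ • (K i).1, (K i).2))‖₊ : ℝ≥0∞)) ^ 2
        / D K ∂(kernelMeasure (m + n)))
      ≤ p ^ (2 * (μ * a)) * ∫⁻ K in B, G K ∂(kernelMeasure (m + n)) :=
    key.trans (mul_le_mul_left hconst_le _)
  -- conclude
  unfold kernelNormMu
  calc (∫⁻ K in B, (⨆ r ∈ Set.Icc (0 : ℝ) 1,
        (‖(ρ ^ (m + n - 1) : ℝ) • w (ρ * r) (fun i => (ρ • (K i).1, (K i).2))‖₊ : ℝ≥0∞)) ^ 2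
          / D K ∂(kernelMeasure (m + n))) ^ ((1 : ℝ) / 2)
      ≤ (p ^ (2 * (μ * a)) * ∫⁻ K in B, G K ∂(kernelMeasure (m + n))) ^ ((1 : ℝ) / 2) :=
        ENNReal.rpow_le_rpow key2 (by norm_num)
    _ = (p ^ (2 * (μ * a))) ^ ((1 : ℝ) / 2)
          * (∫⁻ K in B, G K ∂(kernelMeasure (m + n))) ^ ((1 : ℝ) / 2) :=
        ENNReal.mul_rpow_of_nonneg _ _ (by norm_num)
    _ = p ^ (μ * (m + n) : ℝ) * (∫⁻ K in B, G K ∂(kernelMeasure (m + n))) ^ ((1 : ℝ) / 2) := by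
        rw [← ENNReal.rpow_mul]
        congr 1
        rw [ha]
        push_cast
        ring
end
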